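/- arXiv:2004.13091 — 3 statements merged into one kernel-verified Lean document; each statement's English description precedes it below -/
import Mathlib

section
/- Let Ω ⊂ ℝⁿ and I ⊂ ℝᵐ be bounded domains, X = L²(Ω), Y a Hilbert space compactly embedded into L²(Ω × I), Z = L²(I), and define B : X × Y → Z by B(c,s)(t) = ∫_Ω c(x) s(x,t) dx. If (cᵏ, sᵏ) ⇀ (c*, s*) weakly in X × Y, then B(cᵏ, sᵏ) ⇀ B(c*, s*) weakly in Z. -/
open Filter MeasureTheory
open scoped ENNReal

section Aux

variable {α β : Type*} [MeasurableSpace α] [MeasurableSpace β]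
  {μ : Measure α} {ν : Measure β}

lemma my_ae_fst [SFinite ν] {p : α → Prop} (h : ∀ᵐ x ∂μ, p x) :
    ∀ᵐ z ∂(μ.prod ν), p z.1 := by
  rw [ae_iff] at h ⊢
  have hset : {z : α × β | ¬ p z.1} = {x | ¬ p x} ×ˢ Set.univ := by ext z; simp
  rw [hset, Measure.prod_prod, h, zero_mul]

lemma my_eLpNorm_tensor [SigmaFinite ν] {f : α → ℝ} {g : β → ℝ}
    (hf : AEMeasurable f μ) (hg : AEMeasurable g ν) :
    eLpNorm (fun z : α × β => f z.1 * g z.2) 2 (μ.prod ν)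
      = eLpNorm f 2 μ * eLpNorm g 2 ν := by
  rw [eLpNorm_eq_lintegral_rpow_enorm_toReal two_ne_zero ENNReal.ofNat_ne_top,
    eLpNorm_eq_lintegral_rpow_enorm_toReal two_ne_zero ENNReal.ofNat_ne_top,
    eLpNorm_eq_lintegral_rpow_enorm_toReal two_ne_zero ENNReal.ofNat_ne_top]
  have h1 : ∀ z : α × β, (‖f z.1 * g z.2‖ₑ ^ (2 : ℝ≥0∞).toReal)
      = ‖f z.1‖ₑ ^ (2 : ℝ≥0∞).toReal * ‖g z.2‖ₑ ^ (2 : ℝ≥0∞).toReal := by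
    intro z
    rw [enorm_mul, ENNReal.mul_rpow_of_nonneg]
    positivity
  simp_rw [h1]
  rw [MeasureTheory.lintegral_prod_mul (hf.enorm.pow_const _) (hg.enorm.pow_const _),
    ENNReal.mul_rpow_of_nonneg]
  positivity

lemma my_tensor_memℒp [SigmaFinite μ] [SigmaFinite ν] (c : Lp ℝ 2 μ) (h : Lp ℝ 2 ν) :
    MemLp (fun z : α × β => c z.1 * h z.2) 2 (μ.prod ν) := by
  refine ⟨(Lp.aestronglyMeasurable c).comp_fst.mul (Lp.aestronglyMeasurable h).comp_snd, ?_⟩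
  rw [my_eLpNorm_tensor (Lp.aestronglyMeasurable c).aemeasurable
    (Lp.aestronglyMeasurable h).aemeasurable]
  exact ENNReal.mul_lt_top (Lp.eLpNorm_lt_top c) (Lp.eLpNorm_lt_top h)

lemma my_main {α β : Type*} [MeasurableSpace α] [MeasurableSpace β]
    (μ : Measure α) (ν : Measure β) [SigmaFinite μ] [SigmaFinite ν]
    {Y : Type*} [NormedAddCommGroup Y] [InnerProductSpace ℝ Y] [CompleteSpace Y]
    (e : Y →L[ℝ] Lp ℝ 2 (μ.prod ν))
    (B : Lp ℝ 2 μ → Y → Lp ℝ 2 ν)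
    (hB : ∀ c s, ⇑(B c s) =ᵐ[ν] fun t => ∫ x, (⇑c) x * (⇑(e s)) (x, t) ∂μ)
    (c : ℕ → Lp ℝ 2 μ) (cstar : Lp ℝ 2 μ) (s : ℕ → Y) (sstar : Y)
    (hc : ∀ f : Lp ℝ 2 μ →L[ℝ] ℝ, Tendsto (fun k => f (c k)) atTop (nhds (f cstar)))
    (hes : Tendsto (fun k => ‖e (s k) - e sstar‖) atTop (nhds 0))
    (g : Lp ℝ 2 ν →L[ℝ] ℝ) :
    Tendsto (fun k => g (B (c k) (s k))) atTop (nhds (g (B cstar sstar))) := by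
  -- Riesz representative of `g`
  set h : Lp ℝ 2 ν := (InnerProductSpace.toDual ℝ (Lp ℝ 2 ν)).symm g with hhdef
  have hg : ∀ f : Lp ℝ 2 ν, g f = (inner ℝ h f) := fun f =>
    (InnerProductSpace.toDual_symm_apply).symm
  -- the tensor map
  set T : Lp ℝ 2 μ → Lp ℝ 2 (μ.prod ν) :=
    fun c0 => (my_tensor_memℒp c0 h).toLp _ with hTdef
  have hTnorm : ∀ c0 : Lp ℝ 2 μ, ‖T c0‖ = ‖c0‖ * ‖h‖ := by
    intro c0
    rw [hTdef, Lp.norm_toLp,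
      my_eLpNorm_tensor (Lp.aestronglyMeasurable c0).aemeasurable
        (Lp.aestronglyMeasurable h).aemeasurable,
      ENNReal.toReal_mul, Lp.norm_def, Lp.norm_def]
  have hTadd : ∀ a b : Lp ℝ 2 μ, T (a + b) = T a + T b := by
    intro a b
    apply Lp.ext
    have e5 : ∀ᵐ z ∂(μ.prod ν), (⇑(a + b)) z.1 = (⇑a + ⇑b) z.1 :=
      my_ae_fst (ν := ν) (Lp.coeFn_add a b)
    filter_upwards [(my_tensor_memℒp (a + b) h).coeFn_toLp,
      (my_tensor_memℒp a h).coeFn_toLp, (my_tensor_memℒp b h).coeFn_toLp,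
      Lp.coeFn_add (T a) (T b), e5] with z h1 h2 h3 h4 h5
    rw [h1, h4, Pi.add_apply, h2, h3, h5, Pi.add_apply, add_mul]
  have hTsmul : ∀ (r : ℝ) (a : Lp ℝ 2 μ), T (r • a) = r • T a := by
    intro r a
    apply Lp.ext
    have e5 : ∀ᵐ z ∂(μ.prod ν), (⇑(r • a)) z.1 = (r • ⇑a) z.1 :=
      my_ae_fst (ν := ν) (Lp.coeFn_smul r a)
    filter_upwards [(my_tensor_memℒp (r • a) h).coeFn_toLp,
      (my_tensor_memℒp a h).coeFn_toLp, Lp.coeFn_smul r (T a), e5] with z h1 h2 h3 h5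
    rw [h1, h3, Pi.smul_apply, h2, h5, Pi.smul_apply, smul_eq_mul, smul_eq_mul, mul_assoc]
  -- the weak-limit functional in `c`
  set Φ : Lp ℝ 2 μ →L[ℝ] ℝ := LinearMap.mkContinuous
    { toFun := fun c0 => (inner ℝ (T c0) (e sstar))
      map_add' := fun a b => by
        show (inner ℝ (T (a + b)) (e sstar))
          = (inner ℝ (T a) (e sstar)) + (inner ℝ (T b) (e sstar))
        rw [hTadd, inner_add_left]
      map_smul' := fun r a => by
        show (inner ℝ (T (r • a)) (e sstar))
          = (RingHom.id ℝ) r • (inner ℝ (T a) (e sstar))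
        rw [hTsmul, real_inner_smul_left]; rfl }
    (‖h‖ * ‖e sstar‖)
    (fun c0 => by
      calc ‖(inner ℝ (T c0) (e sstar))‖ ≤ ‖T c0‖ * ‖e sstar‖ := norm_inner_le_norm _ _
        _ = ‖h‖ * ‖e sstar‖ * ‖c0‖ := by rw [hTnorm]; ring) with hΦdef
  have hΦ : ∀ c0 : Lp ℝ 2 μ, Φ c0 = (inner ℝ (T c0) (e sstar)) := fun _ => rfl
  -- key identity: g (B c s) = ⟪T c, e s⟫
  have key : ∀ (c0 : Lp ℝ 2 μ) (s0 : Y), g (B c0 s0) = (inner ℝ (T c0) (e s0)) := by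
    intro c0 s0
    have hint : Integrable (fun z : α × β => (c0 z.1 * h z.2) * (e s0) z) (μ.prod ν) := by
      refine (L2.integrable_inner (𝕜 := ℝ) (T c0) (e s0)).congr ?_
      filter_upwards [(my_tensor_memℒp c0 h).coeFn_toLp] with z hz
      simp [RCLike.inner_apply, conj_trivial, hz]
      rw [mul_comm]; exact congrArg (· * _) hz
    calc g (B c0 s0) = (inner ℝ h (B c0 s0)) := hg _
      _ = ∫ t, h t * (B c0 s0) t ∂ν := by
          rw [L2.inner_def]; simp_rw [RCLike.inner_apply, conj_trivial]
          exact integral_congr_ae (Eventually.of_forall fun _ => mul_comm _ _)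
      _ = ∫ t, h t * ∫ x, c0 x * (e s0) (x, t) ∂μ ∂ν := by
          refine integral_congr_ae ?_
          filter_upwards [hB c0 s0] with t ht
          rw [ht]
      _ = ∫ t, ∫ x, (c0 x * h t) * (e s0) (x, t) ∂μ ∂ν := by
          refine integral_congr_ae (Eventually.of_forall fun t => ?_)
          dsimp only
          rw [← integral_const_mul]
          exact integral_congr_ae (Eventually.of_forall fun x => by ring)
      _ = ∫ z, (c0 z.1 * h z.2) * (e s0) z ∂(μ.prod ν) := by
          rw [← integral_integral_swap hint]
          exact integral_integral hint
      _ = ∫ z, (T c0) z * (e s0) z ∂(μ.prod ν) := by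
          refine integral_congr_ae ?_
          filter_upwards [(my_tensor_memℒp c0 h).coeFn_toLp] with z hz
          rw [hz]
      _ = (inner ℝ (T c0) (e s0)) := by
          rw [L2.inner_def]; simp_rw [RCLike.inner_apply, conj_trivial]
          exact integral_congr_ae (Eventually.of_forall fun _ => mul_comm _ _)
  -- boundedness of the weakly convergent sequence `c`
  obtain ⟨C, hC⟩ : ∃ C, ∀ k, ‖c k‖ ≤ C := by
    have hpt : ∀ f : StrongDual ℝ (Lp ℝ 2 μ), ∃ C, ∀ k,
        ‖NormedSpace.inclusionInDoubleDual ℝ (Lp ℝ 2 μ) (c k) f‖ ≤ C := by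
      intro f
      obtain ⟨Cf, hCf⟩ := ((hc f).norm).bddAbove_range
      exact ⟨Cf, fun k => by simpa [NormedSpace.dual_def] using hCf ⟨k, rfl⟩⟩
    obtain ⟨C', hC'⟩ := banach_steinhaus hpt
    refine ⟨C', fun k => ?_⟩
    have hiso := (NormedSpace.inclusionInDoubleDualLi (𝕜 := ℝ) (E := Lp ℝ 2 μ)).norm_map (c k)
    calc ‖c k‖ = ‖NormedSpace.inclusionInDoubleDual ℝ (Lp ℝ 2 μ) (c k)‖ := hiso.symm
      _ ≤ C' := hC' k
  -- term 1: ⟪T cᵏ, e sᵏ - e s*⟫ → 0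
  have h1 : Tendsto (fun k => (inner ℝ (T (c k)) (e (s k) - e sstar))) atTop (nhds 0) := by
    have hb : ∀ k, ‖(inner ℝ (T (c k)) (e (s k) - e sstar))‖
        ≤ C * ‖h‖ * ‖e (s k) - e sstar‖ := by
      intro k
      calc ‖(inner ℝ (T (c k)) (e (s k) - e sstar))‖
          ≤ ‖T (c k)‖ * ‖e (s k) - e sstar‖ := norm_inner_le_norm _ _
        _ ≤ C * ‖h‖ * ‖e (s k) - e sstar‖ := by
            refine mul_le_mul_of_nonneg_right ?_ (norm_nonneg _)
            rw [hTnorm]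
            exact mul_le_mul_of_nonneg_right (hC k) (norm_nonneg _)
    have hlim : Tendsto (fun k => C * ‖h‖ * ‖e (s k) - e sstar‖) atTop (nhds 0) := by
      simpa using hes.const_mul (C * ‖h‖)
    exact squeeze_zero_norm hb hlim
  -- term 2: ⟪T cᵏ, e s*⟫ → ⟪T c*, e s*⟫
  have h2 : Tendsto (fun k => Φ (c k)) atTop (nhds (Φ cstar)) := hc Φ
  have hsum := h1.add h2
  rw [zero_add] at hsum
  have heq : ∀ k, g (B (c k) (s k))
      = (inner ℝ (T (c k)) (e (s k) - e sstar)) + Φ (c k) := by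
    intro k
    rw [key, hΦ, inner_sub_right]
    ring
  rw [show (fun k => g (B (c k) (s k)))
      = fun k => (inner ℝ (T (c k)) (e (s k) - e sstar)) + Φ (c k) from funext heq,
    show g (B cstar sstar) = Φ cstar from (key cstar sstar).trans (hΦ cstar).symm]
  exact hsum

end Aux

/-- The integral operator `B(c,s)(t) = ∫_Ω c(x) s(x,t) dx`, with `s` ranging over a Hilbert
space `Y` compactly embedded (via `e`) into `L²(Ω × I)`, is sequentially weak-weak
continuous: weak convergence `(cᵏ,sᵏ) ⇀ (c*,s*)` implies `B(cᵏ,sᵏ) ⇀ B(c*,s*)` in `L²(I)`. -/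
theorem stmt_3 {n m : ℕ}
    (Ω : Set (EuclideanSpace ℝ (Fin n))) (I : Set (EuclideanSpace ℝ (Fin m)))
    (hΩb : Bornology.IsBounded Ω) (hIb : Bornology.IsBounded I)
    (hΩm : MeasurableSet Ω) (hIm : MeasurableSet I)
    {Y : Type*} [NormedAddCommGroup Y] [InnerProductSpace ℝ Y] [CompleteSpace Y]
    (e : Y →L[ℝ] Lp ℝ 2 ((volume.restrict Ω).prod (volume.restrict I)))
    -- compact embedding: weak convergence in Y gives norm convergence in L²(Ω × I)
    (hcompact : ∀ (s : ℕ → Y) (slim : Y),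
      (∀ f : Y →L[ℝ] ℝ, Tendsto (fun k => f (s k)) atTop (nhds (f slim))) →
      Tendsto (fun k => ‖e (s k) - e slim‖) atTop (nhds 0))
    (B : Lp ℝ 2 (volume.restrict Ω) → Y → Lp ℝ 2 (volume.restrict I))
    (hB : ∀ c s, ⇑(B c s) =ᵐ[volume.restrict I]
      fun t => ∫ x, (⇑c) x * (⇑(e s)) (x, t) ∂(volume.restrict Ω))
    (c : ℕ → Lp ℝ 2 (volume.restrict Ω)) (cstar : Lp ℝ 2 (volume.restrict Ω))
    (s : ℕ → Y) (sstar : Y)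
    (hc : ∀ f : Lp ℝ 2 (volume.restrict Ω) →L[ℝ] ℝ,
      Tendsto (fun k => f (c k)) atTop (nhds (f cstar)))
    (hs : ∀ f : Y →L[ℝ] ℝ, Tendsto (fun k => f (s k)) atTop (nhds (f sstar))) :
    ∀ g : Lp ℝ 2 (volume.restrict I) →L[ℝ] ℝ,
      Tendsto (fun k => g (B (c k) (s k))) atTop (nhds (g (B cstar sstar))) := fun g =>
  my_main (volume.restrict Ω) (volume.restrict I) e B hB c cstar s sstar hc
    (hcompact s sstar hs) g
end

section
/- Let X = L²(Ω), Z = L²(I) for bounded domains Ω, I, let {Ψₖ}ₖ₌₁^K be orthonormal functions in L²(Ω × I), let Y = ℝ^K, and define B : X × Y → Z by B(c,κ)(t) = ∫_Ω c(x) Σₖ κₖ Ψₖ(x,t) dx. Then B is sequentially weak-weak continuous: (cʲ, κʲ) ⇀ (c*, κ*) implies B(cʲ, κʲ) ⇀ B(c*, κ*). -/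
set_option maxHeartbeats 1000000

open Filter MeasureTheory
open scoped ENNReal RealInnerProductSpace

namespace Stmt4Aux

variable {α β : Type*} [MeasurableSpace α] [MeasurableSpace β]
  {μ : Measure α} {ν : Measure β} [SigmaFinite μ] [SigmaFinite ν]

lemma coeFn_finset_sum {ι : Type*} (s : Finset ι) (f : ι → Lp ℝ 2 ν) :
    ⇑(∑ i ∈ s, f i) =ᵐ[ν] fun t => ∑ i ∈ s, f i t := by
  classical
  induction s using Finset.induction_on with
  | empty => simp only [Finset.sum_empty]; exact Lp.coeFn_zero ℝ 2 ν
  | insert _ _ hnot ih =>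
      rename_i a s
      rw [Finset.sum_insert hnot]
      filter_upwards [Lp.coeFn_add (f a) (∑ i ∈ s, f i), ih] with t h1 h2
      simp only [h1, Pi.add_apply, h2, Finset.sum_insert hnot]

lemma slice_memℒp (Ψ : Lp ℝ 2 (μ.prod ν)) :
    ∀ᵐ t ∂ν, MemLp (fun x => Ψ (x, t)) 2 μ := by
  have hsq : Integrable (fun z => (Ψ z) ^ 2) (μ.prod ν) := (Lp.memLp Ψ).integrable_sq
  have hm := (Lp.aestronglyMeasurable Ψ).prod_swap.prodMk_left
  filter_upwards [hsq.prod_left_ae, hm] with t h1 h2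
  exact (memLp_two_iff_integrable_sq h2).2 h1

lemma integrable_mul_of_memℒp {f g : α → ℝ} (hf : MemLp f 2 μ) (hg : MemLp g 2 μ) :
    Integrable (fun x => f x * g x) μ := by
  have h : MemLp (f • g) 1 μ :=
    hg.smul hf
  exact memLp_one_iff_integrable.mp h

lemma norm_le_of_rep (c : Lp ℝ 2 μ) (Ψ : Lp ℝ 2 (μ.prod ν)) (D : Lp ℝ 2 ν)
    (hD : ⇑D =ᵐ[ν] fun t => ∫ x, c x * Ψ (x, t) ∂μ) :
    ‖D‖ ≤ ‖c‖ * ‖Ψ‖ := by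
  have hΨsq : Integrable (fun z => (Ψ z) ^ 2) (μ.prod ν) := (Lp.memLp Ψ).integrable_sq
  set h : β → ℝ := fun t => ∫ x, (Ψ (x, t)) ^ 2 ∂μ with hh
  have hint_h : Integrable h ν := hΨsq.integral_prod_right
  have hhsum : ∫ t, h t ∂ν = ‖Ψ‖ ^ 2 := by
    have h1 : ∫ z, (Ψ z) ^ 2 ∂(μ.prod ν) = ‖Ψ‖ ^ 2 := by
      rw [← real_inner_self_eq_norm_sq, L2.inner_def]
      congr 1; funext z; simp [RCLike.inner_apply, sq]
    have h2 : ∫ x, ∫ t, (Ψ (x, t)) ^ 2 ∂ν ∂μ = ∫ t, ∫ x, (Ψ (x, t)) ^ 2 ∂μ ∂ν :=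
      integral_integral_swap (f := fun x t => (Ψ (x, t)) ^ 2) hΨsq
    rw [hh, ← h2, ← h1, integral_prod _ hΨsq]
  have key : ∀ᵐ t ∂ν, D t * D t ≤ ‖c‖ ^ 2 * h t := by
    filter_upwards [hD, slice_memℒp Ψ] with t ht hmem
    set φ := hmem.toLp _ with hφdef
    have hφ : ⇑φ =ᵐ[μ] fun x => Ψ (x, t) := hmem.coeFn_toLp
    have h1 : D t = ⟪c, φ⟫ := by
      rw [ht, L2.inner_def]
      refine integral_congr_ae ?_
      filter_upwards [hφ] with x hx
      simp [RCLike.inner_apply, hx, mul_comm]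
    have h2 : ‖φ‖ ^ 2 = h t := by
      rw [← real_inner_self_eq_norm_sq, L2.inner_def, hh]
      refine integral_congr_ae ?_
      filter_upwards [hφ] with x hx
      simp [RCLike.inner_apply, hx, sq]
    have hcs := abs_real_inner_le_norm c φ
    calc D t * D t = ⟪c, φ⟫ ^ 2 := by rw [h1]; ring
    _ ≤ (‖c‖ * ‖φ‖) ^ 2 := by
        rw [← sq_abs]
        exact pow_le_pow_left₀ (abs_nonneg _) hcs 2
    _ = ‖c‖ ^ 2 * h t := by rw [mul_pow, h2]
  have hDD : ∫ t, D t * D t ∂ν = ‖D‖ ^ 2 := by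
    rw [← real_inner_self_eq_norm_sq, L2.inner_def]
    congr 1
  have hDint : Integrable (fun t => D t * D t) ν := by
    simpa [sq] using (Lp.memLp D).integrable_sq
  have hsq_le : ‖D‖ ^ 2 ≤ (‖c‖ * ‖Ψ‖) ^ 2 := by
    rw [← hDD]
    calc ∫ t, D t * D t ∂ν ≤ ∫ t, ‖c‖ ^ 2 * h t ∂ν :=
          integral_mono_ae hDint (hint_h.const_mul _) key
    _ = ‖c‖ ^ 2 * ∫ t, h t ∂ν := integral_const_mul _ _
    _ = (‖c‖ * ‖Ψ‖) ^ 2 := by rw [hhsum]; ring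
  nlinarith [norm_nonneg D, mul_nonneg (norm_nonneg c) (norm_nonneg Ψ)]

end Stmt4Aux

open Stmt4Aux in
/-- With a finite-dimensional parameter space `Y = ℝ^K` and orthonormal kernels
`Ψₖ ∈ L²(Ω × I)`, the operator `B(c,κ)(t) = ∫_Ω c(x) Σₖ κₖ Ψₖ(x,t) dx` is sequentially
weak-weak continuous. -/
theorem stmt_4 {n m K : ℕ}
    (Ω : Set (EuclideanSpace ℝ (Fin n))) (I : Set (EuclideanSpace ℝ (Fin m)))
    (hΩb : Bornology.IsBounded Ω) (hIb : Bornology.IsBounded I)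
    (hΩm : MeasurableSet Ω) (hIm : MeasurableSet I)
    (Ψ : Fin K → Lp ℝ 2 ((volume.restrict Ω).prod (volume.restrict I)))
    (hΨ : Orthonormal ℝ Ψ)
    (B : Lp ℝ 2 (volume.restrict Ω) → EuclideanSpace ℝ (Fin K) → Lp ℝ 2 (volume.restrict I))
    (hB : ∀ c κ, ⇑(B c κ) =ᵐ[volume.restrict I]
      fun t => ∫ x, (⇑c) x * (∑ k, κ k * (⇑(Ψ k)) (x, t)) ∂(volume.restrict Ω))
    (c : ℕ → Lp ℝ 2 (volume.restrict Ω)) (cstar : Lp ℝ 2 (volume.restrict Ω))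
    (κ : ℕ → EuclideanSpace ℝ (Fin K)) (κstar : EuclideanSpace ℝ (Fin K))
    (hc : ∀ f : Lp ℝ 2 (volume.restrict Ω) →L[ℝ] ℝ,
      Tendsto (fun j => f (c j)) atTop (nhds (f cstar)))
    (hκ : ∀ f : EuclideanSpace ℝ (Fin K) →L[ℝ] ℝ,
      Tendsto (fun j => f (κ j)) atTop (nhds (f κstar))) :
    ∀ g : Lp ℝ 2 (volume.restrict I) →L[ℝ] ℝ,
      Tendsto (fun j => g (B (c j) (κ j))) atTop (nhds (g (B cstar κstar))) := by
  classical
  intro g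
  -- representation of `B cc (EuclideanSpace.single k (1:ℝ))`
  have hBrep : ∀ (cc : Lp ℝ 2 (volume.restrict Ω)) (k : Fin K), ⇑(B cc (EuclideanSpace.single k (1:ℝ))) =ᵐ[(volume.restrict I)]
      fun t => ∫ x, cc x * Ψ k (x, t) ∂(volume.restrict Ω) := by
    intro cc k
    have h0 := hB cc (EuclideanSpace.single k (1:ℝ))
    have h1 : (fun t => ∫ x, cc x * (∑ k', (EuclideanSpace.single k (1:ℝ)) k' * Ψ k' (x, t)) ∂(volume.restrict Ω))
        = fun t => ∫ x, cc x * Ψ k (x, t) ∂(volume.restrict Ω) := by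
      funext t
      congr 1
      funext x
      congr 1
      simp [EuclideanSpace.single_apply]
    rw [h1] at h0
    exact h0
  -- a.e. integrability of slices against any `cc`
  have hIntAll : ∀ cc : Lp ℝ 2 (volume.restrict Ω), ∀ᵐ t ∂(volume.restrict I), ∀ k, Integrable (fun x => cc x * Ψ k (x, t)) (volume.restrict Ω) := by
    intro cc
    rw [ae_all_iff]
    intro k
    filter_upwards [slice_memℒp (Ψ k)] with t hm
    exact integrable_mul_of_memℒp (Lp.memLp cc) hm
  -- linearity in κ
  have hκlin : ∀ (cc : Lp ℝ 2 (volume.restrict Ω)) (κκ : EuclideanSpace ℝ (Fin K)),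
      B cc κκ = ∑ k, κκ k • B cc (EuclideanSpace.single k (1:ℝ)) := by
    intro cc κκ
    apply Lp.ext
    have hsum := coeFn_finset_sum Finset.univ (fun k => κκ k • B cc (EuclideanSpace.single k (1:ℝ)))
    have hsmul : ∀ᵐ t ∂(volume.restrict I), ∀ k, (κκ k • B cc (EuclideanSpace.single k (1:ℝ))) t = κκ k * (B cc (EuclideanSpace.single k (1:ℝ))) t := by
      rw [ae_all_iff]
      intro k
      filter_upwards [Lp.coeFn_smul (κκ k) (B cc (EuclideanSpace.single k (1:ℝ)))] with t ht
      simp [ht]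
    have hreps : ∀ᵐ t ∂(volume.restrict I), ∀ k, (B cc (EuclideanSpace.single k (1:ℝ))) t = ∫ x, cc x * Ψ k (x, t) ∂(volume.restrict Ω) := by
      rw [ae_all_iff]; intro k; exact hBrep cc k
    filter_upwards [hB cc κκ, hsum, hsmul, hreps, hIntAll cc] with t h0 h1 h2 h3 h4
    rw [h0, h1]
    have hre : (fun x => cc x * ∑ k, κκ k * Ψ k (x, t))
        = fun x => ∑ k, κκ k * (cc x * Ψ k (x, t)) := by
      funext x
      rw [Finset.mul_sum]
      exact Finset.sum_congr rfl fun k _ => by ring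
    rw [hre, integral_finset_sum _ (fun k _ => (h4 k).const_mul _)]
    refine Finset.sum_congr rfl fun k _ => ?_
    rw [h2 k, h3 k, integral_const_mul]
  -- the continuous linear functionals
  have hBadd : ∀ (c₁ c₂ : Lp ℝ 2 (volume.restrict Ω)) (k : Fin K),
      B (c₁ + c₂) (EuclideanSpace.single k (1:ℝ)) = B c₁ (EuclideanSpace.single k (1:ℝ)) + B c₂ (EuclideanSpace.single k (1:ℝ)) := by
    intro c₁ c₂ k
    apply Lp.ext
    filter_upwards [hBrep (c₁ + c₂) k, hBrep c₁ k, hBrep c₂ k,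
      Lp.coeFn_add (B c₁ (EuclideanSpace.single k (1:ℝ))) (B c₂ (EuclideanSpace.single k (1:ℝ))), hIntAll c₁, hIntAll c₂] with t h0 h1 h2 h3 h4 h5
    rw [h0, h3]
    have hcong : ∫ x, (c₁ + c₂ : Lp ℝ 2 (volume.restrict Ω)) x * Ψ k (x, t) ∂(volume.restrict Ω)
        = ∫ x, (c₁ x * Ψ k (x, t) + c₂ x * Ψ k (x, t)) ∂(volume.restrict Ω) := by
      refine integral_congr_ae ?_
      filter_upwards [Lp.coeFn_add c₁ c₂] with x hx
      rw [hx]; simp; ring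
    rw [hcong, integral_add (h4 k) (h5 k)]
    simp [h1, h2]
  have hBsmul : ∀ (a : ℝ) (cc : Lp ℝ 2 (volume.restrict Ω)) (k : Fin K),
      B (a • cc) (EuclideanSpace.single k (1:ℝ)) = a • B cc (EuclideanSpace.single k (1:ℝ)) := by
    intro a cc k
    apply Lp.ext
    filter_upwards [hBrep (a • cc) k, hBrep cc k,
      Lp.coeFn_smul a (B cc (EuclideanSpace.single k (1:ℝ)))] with t h0 h1 h2
    rw [h0, h2]
    have hcong : ∫ x, (a • cc : Lp ℝ 2 (volume.restrict Ω)) x * Ψ k (x, t) ∂(volume.restrict Ω)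
        = ∫ x, a * (cc x * Ψ k (x, t)) ∂(volume.restrict Ω) := by
      refine integral_congr_ae ?_
      filter_upwards [Lp.coeFn_smul a cc] with x hx
      rw [hx]; simp; ring
    rw [hcong, integral_const_mul]
    simp [h1]
  let T : Fin K → (Lp ℝ 2 (volume.restrict Ω) →L[ℝ] ℝ) := fun k =>
    LinearMap.mkContinuous
      { toFun := fun cc => g (B cc (EuclideanSpace.single k (1:ℝ)))
        map_add' := fun c₁ c₂ => by rw [hBadd c₁ c₂ k, map_add]
        map_smul' := fun a cc => by rw [hBsmul a cc k, _root_.map_smul]; rfl }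
      (‖g‖ * ‖Ψ k‖)
      (fun cc => by
        have h1 : ‖g (B cc (EuclideanSpace.single k (1:ℝ)))‖ ≤ ‖g‖ * ‖B cc (EuclideanSpace.single k (1:ℝ))‖ := g.le_opNorm _
        have h2 : ‖B cc (EuclideanSpace.single k (1:ℝ))‖ ≤ ‖cc‖ * ‖Ψ k‖ := norm_le_of_rep cc (Ψ k) _ (hBrep cc k)
        calc ‖g (B cc (EuclideanSpace.single k (1:ℝ)))‖ ≤ ‖g‖ * (‖cc‖ * ‖Ψ k‖) :=
              h1.trans (mul_le_mul_of_nonneg_left h2 (norm_nonneg g))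
        _ = ‖g‖ * ‖Ψ k‖ * ‖cc‖ := by ring) 
  have hTval : ∀ (cc : Lp ℝ 2 (volume.restrict Ω)) (κκ : EuclideanSpace ℝ (Fin K)),
      g (B cc κκ) = ∑ k, κκ k * T k cc := by
    intro cc κκ
    rw [hκlin cc κκ, map_sum]
    refine Finset.sum_congr rfl fun k _ => ?_
    rw [_root_.map_smul]
    rfl
  have hconv : Tendsto (fun j => ∑ k, κ j k * T k (c j)) atTop
      (nhds (∑ k, κstar k * T k cstar)) := by
    refine tendsto_finset_sum _ fun k _ => ?_
    exact (hκ (EuclideanSpace.proj k)).mul (hc (T k))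
  refine Tendsto.congr (fun j => (hTval (c j) (κ j)).symm) ?_
  rw [hTval cstar κstar]
  exact hconv
end

section
/- Let X, Y, Z be Hilbert spaces and B : X × Y → Z bilinear with ‖B(c,s)‖ ≤ C‖c‖‖s‖. Suppose there exists ω ∈ Z such that (ξ_{c*}, ξ_{s*}) = B′(c*,s*)*ω (source condition), and suppose D_{R̃}^{ξ*}((c,s),(c*,s*)) ≥ D_{ℓᵖ}^{ξ_{c*}}(c,c*) ≥ ‖c − c*‖² (2-convexity for 1<p≤2). Then for all (c,s): ⟨(ξ_{c*},ξ_{s*}), (c*−c, s*−s)⟩ ≤ (C‖ω‖/2) D_{R̃}^{ξ*}((c,s),(c*,s*)) + ‖ω‖·‖B(c,s) − B(c*,s*)‖ + (C‖ω‖/2)‖s − s*‖². -/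
open scoped RealInnerProductSpace

/-- Source condition estimate: if `(ξ_c*, ξ_s*) = B′(c*,s*)* ω` and the Bregman distance
of `R̃` dominates the `ℓᵖ` Bregman distance which dominates `‖c − c*‖²`, then
`⟨ξ*, (c*−c, s*−s)⟩ ≤ (C‖ω‖/2) D_R̃ + ‖ω‖‖B(c,s) − B(c*,s*)‖ + (C‖ω‖/2)‖s − s*‖²`. -/
theorem stmt_12 {X Y Z : Type*}
    [NormedAddCommGroup X] [InnerProductSpace ℝ X]
    [NormedAddCommGroup Y] [InnerProductSpace ℝ Y]
    [NormedAddCommGroup Z] [InnerProductSpace ℝ Z]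
    (B : X → Y → Z) (C : ℝ) (hC : 0 ≤ C)
    (hadd₁ : ∀ c₁ c₂ s, B (c₁ + c₂) s = B c₁ s + B c₂ s)
    (hsmul₁ : ∀ (a : ℝ) c s, B (a • c) s = a • B c s)
    (hadd₂ : ∀ c s₁ s₂, B c (s₁ + s₂) = B c s₁ + B c s₂)
    (hsmul₂ : ∀ (a : ℝ) c s, B c (a • s) = a • B c s)
    (hbound : ∀ c s, ‖B c s‖ ≤ C * ‖c‖ * ‖s‖)
    (cstar : X) (sstar : Y) (ω : Z) (ξc : X) (ξs : Y)
    -- source condition (ξ_c*, ξ_s*) = B′(c*,s*)* ω, expressed weakly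
    (hsource : ∀ (x : X) (y : Y),
      ⟪ξc, x⟫ + ⟪ξs, y⟫ = ⟪ω, B cstar y + B x sstar⟫)
    (DR : X → Y → ℝ) (Dlp : X → ℝ)
    (hD1 : ∀ c s, Dlp c ≤ DR c s)
    (hD2 : ∀ c, ‖c - cstar‖ ^ 2 ≤ Dlp c) :
    ∀ (c : X) (s : Y),
      ⟪ξc, cstar - c⟫ + ⟪ξs, sstar - s⟫
        ≤ (C * ‖ω‖ / 2) * DR c s + ‖ω‖ * ‖B c s - B cstar sstar‖
          + (C * ‖ω‖ / 2) * ‖s - sstar‖ ^ 2 := by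

  intro c s
  have hsub₁ : ∀ (x y : X) (s : Y), B (x - y) s = B x s - B y s := by
    intro x y s
    have : B (x + (-1 : ℝ) • y) s = B x s + (-1 : ℝ) • B y s := by
      rw [hadd₁, hsmul₁]
    simpa [sub_eq_add_neg] using this
  have hsub₂ : ∀ (x : X) (s t : Y), B x (s - t) = B x s - B x t := by
    intro x s t
    have : B x (s + (-1 : ℝ) • t) = B x s + (-1 : ℝ) • B x t := by
      rw [hadd₂, hsmul₂]
    simpa [sub_eq_add_neg] using this
  have key : B cstar (sstar - s) + B (cstar - c) sstar
      = B (c - cstar) (s - sstar) - (B c s - B cstar sstar) := by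
    rw [hsub₂, hsub₁, hsub₁, hsub₂, hsub₂]
    abel
  have h1 : ⟪ξc, cstar - c⟫ + ⟪ξs, sstar - s⟫
      = ⟪ω, B (c - cstar) (s - sstar)⟫ - ⟪ω, B c s - B cstar sstar⟫ := by
    rw [hsource (cstar - c) (sstar - s), key, inner_sub_right]
  have h2 : ⟪ω, B (c - cstar) (s - sstar)⟫ ≤ C * ‖ω‖ * (‖c - cstar‖ * ‖s - sstar‖) := by
    calc ⟪ω, B (c - cstar) (s - sstar)⟫ ≤ ‖ω‖ * ‖B (c - cstar) (s - sstar)‖ :=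
          real_inner_le_norm _ _
      _ ≤ ‖ω‖ * (C * ‖c - cstar‖ * ‖s - sstar‖) := by
          exact mul_le_mul_of_nonneg_left (hbound _ _) (norm_nonneg _)
      _ = C * ‖ω‖ * (‖c - cstar‖ * ‖s - sstar‖) := by ring
  have h3 : ‖c - cstar‖ * ‖s - sstar‖ ≤ (‖c - cstar‖ ^ 2 + ‖s - sstar‖ ^ 2) / 2 := by
    nlinarith [sq_nonneg (‖c - cstar‖ - ‖s - sstar‖)]
  have h4 : - ⟪ω, B c s - B cstar sstar⟫ ≤ ‖ω‖ * ‖B c s - B cstar sstar‖ := by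
    have := real_inner_le_norm ω (-(B c s - B cstar sstar))
    rw [← inner_neg_right, ← norm_neg (B c s - B cstar sstar)]; simpa using this
  have h5 : ‖c - cstar‖ ^ 2 ≤ DR c s := le_trans (hD2 c) (hD1 c s)
  have hCω : 0 ≤ C * ‖ω‖ := mul_nonneg hC (norm_nonneg _)
  calc ⟪ξc, cstar - c⟫ + ⟪ξs, sstar - s⟫
      = ⟪ω, B (c - cstar) (s - sstar)⟫ - ⟪ω, B c s - B cstar sstar⟫ := h1
    _ ≤ C * ‖ω‖ * ((‖c - cstar‖ ^ 2 + ‖s - sstar‖ ^ 2) / 2)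
        + ‖ω‖ * ‖B c s - B cstar sstar‖ := by
        have := mul_le_mul_of_nonneg_left h3 hCω
        linarith [h2, h4]
    _ ≤ (C * ‖ω‖ / 2) * DR c s + ‖ω‖ * ‖B c s - B cstar sstar‖
          + (C * ‖ω‖ / 2) * ‖s - sstar‖ ^ 2 := by nlinarith [h5, hCω]
end
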